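/- arXiv:2604.26196 — 3 statements merged into one kernel-verified Lean document; each statement's English description precedes it below -/
import Mathlib

section
/- Let V be a finite-dimensional real vector space, 𝕋V = V × V* its generalized tangent space with the symmetric bilinear pairing ⟨(u,ξ),(v,η)⟩ = ξ(v) + η(u). If L ⊆ 𝕋V is a Lagrangian subspace and I ⊆ 𝕋V is an isotropic subspace (the pairing vanishes identically on I), then the subspace L[I] := (L ∩ I^⊥) + I is Lagrangian, where I^⊥ denotes the orthogonal complement of I with respect to the pairing. -/
open Module

variable {V W : Type*} [AddCommGroup V] [Module ℝ V] [AddCommGroup W] [Module ℝ W]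

/-- The canonical symmetric pairing on the generalized tangent space `𝕋V = V × V*`:
`⟨(u,ξ),(v,η)⟩ = ξ(v) + η(u)`. -/
noncomputable def gpair : (V × Module.Dual ℝ V) →ₗ[ℝ] (V × Module.Dual ℝ V) →ₗ[ℝ] ℝ :=
  LinearMap.mk₂ ℝ (fun a b => a.2 b.1 + b.2 a.1)
    (fun a a' b => by
      simp only [Prod.fst_add, Prod.snd_add, LinearMap.add_apply, map_add]; ring)
    (fun r a b => by
      simp only [Prod.smul_fst, Prod.smul_snd, LinearMap.smul_apply, map_smul,
        smul_eq_mul]; ring)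
    (fun a b b' => by
      simp only [Prod.fst_add, Prod.snd_add, LinearMap.add_apply, map_add]; ring)
    (fun r a b => by
      simp only [Prod.smul_fst, Prod.smul_snd, LinearMap.smul_apply, map_smul,
        smul_eq_mul]; ring)

/-- Orthogonal complement with respect to the canonical pairing on `𝕋V`. -/
noncomputable def gperp (S : Submodule ℝ (V × Module.Dual ℝ V)) :
    Submodule ℝ (V × Module.Dual ℝ V) where
  carrier := {a | ∀ b ∈ S, gpair a b = 0}
  add_mem' := by
    intro a b ha hb c hc
    rw [map_add, LinearMap.add_apply, ha c hc, hb c hc, add_zero]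
  zero_mem' := by
    intro c hc
    rw [map_zero, LinearMap.zero_apply]
  smul_mem' := by
    intro r a ha c hc
    rw [map_smul, LinearMap.smul_apply, ha c hc, smul_zero]

/-- A subspace of `𝕋V` is Lagrangian if it equals its own orthogonal complement. -/
def IsLagrangian (L : Submodule ℝ (V × Module.Dual ℝ V)) : Prop :=
  gperp L = L

/-- A linear map `π : V* → V` is skew-symmetric. -/
def IsSkew (π : Module.Dual ℝ V →ₗ[ℝ] V) : Prop :=
  ∀ ξ η : Module.Dual ℝ V, η (π ξ) = -(ξ (π η))

/-- The tangent product `L ⋆ R = {(u, ξ+η) : (u,ξ) ∈ L, (u,η) ∈ R}`. -/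
def tanProd (L R : Submodule ℝ (V × Module.Dual ℝ V)) :
    Submodule ℝ (V × Module.Dual ℝ V) where
  carrier := {a | ∃ ξ η : Module.Dual ℝ V, (a.1, ξ) ∈ L ∧ (a.1, η) ∈ R ∧ a.2 = ξ + η}
  add_mem' := by
    rintro a b ⟨ξ, η, h1, h2, h3⟩ ⟨ξ', η', h1', h2', h3'⟩
    refine ⟨ξ + ξ', η + η', ?_, ?_, ?_⟩
    · simpa [Prod.fst_add] using L.add_mem h1 h1'
    · simpa [Prod.fst_add] using R.add_mem h2 h2'
    · simp only [Prod.snd_add, h3, h3']; abel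
  zero_mem' := ⟨0, 0, by simp only [Prod.fst_zero, Prod.snd_zero, map_zero, LinearMap.zero_comp]; exact L.zero_mem, by simp only [Prod.fst_zero, Prod.snd_zero, map_zero, LinearMap.zero_comp]; exact R.zero_mem, by simp⟩
  smul_mem' := by
    rintro r a ⟨ξ, η, h1, h2, h3⟩
    refine ⟨r • ξ, r • η, ?_, ?_, ?_⟩
    · simpa [Prod.smul_fst] using L.smul_mem r h1
    · simpa [Prod.smul_fst] using R.smul_mem r h2
    · simp only [Prod.smul_snd, h3, smul_add]

/-- The cotangent product `L ⊛ R = {(u+v, ξ) : (u,ξ) ∈ L, (v,ξ) ∈ R}`. -/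
def cotProd (L R : Submodule ℝ (V × Module.Dual ℝ V)) :
    Submodule ℝ (V × Module.Dual ℝ V) where
  carrier := {a | ∃ u v : V, (u, a.2) ∈ L ∧ (v, a.2) ∈ R ∧ a.1 = u + v}
  add_mem' := by
    rintro a b ⟨u, v, h1, h2, h3⟩ ⟨u', v', h1', h2', h3'⟩
    refine ⟨u + u', v + v', ?_, ?_, ?_⟩
    · simpa [Prod.snd_add] using L.add_mem h1 h1'
    · simpa [Prod.snd_add] using R.add_mem h2 h2'
    · simp only [Prod.fst_add, h3, h3']; abel
  zero_mem' := ⟨0, 0, by simp only [Prod.fst_zero, Prod.snd_zero, map_zero, LinearMap.zero_comp]; exact L.zero_mem, by simp only [Prod.fst_zero, Prod.snd_zero, map_zero, LinearMap.zero_comp]; exact R.zero_mem, by simp⟩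
  smul_mem' := by
    rintro r a ⟨u, v, h1, h2, h3⟩
    refine ⟨r • u, r • v, ?_, ?_, ?_⟩
    · simpa [Prod.smul_snd] using L.smul_mem r h1
    · simpa [Prod.smul_snd] using R.smul_mem r h2
    · simp only [Prod.smul_fst, h3, smul_add]

/-- The backward image `φ^!(L) = {(u, η ∘ φ) : (φ(u), η) ∈ L}`. -/
def back (φ : V →ₗ[ℝ] W) (L : Submodule ℝ (W × Module.Dual ℝ W)) :
    Submodule ℝ (V × Module.Dual ℝ V) where
  carrier := {a | ∃ η : Module.Dual ℝ W, (φ a.1, η) ∈ L ∧ a.2 = η.comp φ}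
  add_mem' := by
    rintro a b ⟨η, h1, h2⟩ ⟨η', h1', h2'⟩
    refine ⟨η + η', ?_, ?_⟩
    · simpa [Prod.fst_add, map_add] using L.add_mem h1 h1'
    · simp only [Prod.snd_add, h2, h2', LinearMap.add_comp]
  zero_mem' := ⟨0, by simp only [Prod.fst_zero, Prod.snd_zero, map_zero, LinearMap.zero_comp]; exact L.zero_mem, by simp⟩
  smul_mem' := by
    rintro r a ⟨η, h1, h2⟩
    refine ⟨r • η, ?_, ?_⟩
    · simpa [Prod.smul_fst, map_smul] using L.smul_mem r h1
    · simp only [Prod.smul_snd, h2, LinearMap.smul_comp]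

/-- The forward image `φ_!(L) = {(φ(u), η) : (u, η ∘ φ) ∈ L}`. -/
def fwd (φ : V →ₗ[ℝ] W) (L : Submodule ℝ (V × Module.Dual ℝ V)) :
    Submodule ℝ (W × Module.Dual ℝ W) where
  carrier := {b | ∃ u : V, φ u = b.1 ∧ (u, b.2.comp φ) ∈ L}
  add_mem' := by
    rintro a b ⟨u, h1, h2⟩ ⟨u', h1', h2'⟩
    refine ⟨u + u', ?_, ?_⟩
    · simp only [map_add, h1, h1', Prod.fst_add]
    · have := L.add_mem h2 h2'
      simpa [Prod.snd_add, LinearMap.add_comp] using this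
  zero_mem' := ⟨0, by simp, by simp only [Prod.fst_zero, Prod.snd_zero, map_zero, LinearMap.zero_comp]; exact L.zero_mem⟩
  smul_mem' := by
    rintro r a ⟨u, h1, h2⟩
    refine ⟨r • u, ?_, ?_⟩
    · simp only [map_smul, h1, Prod.smul_fst]
    · have := L.smul_mem r h2
      simpa [Prod.smul_snd, LinearMap.smul_comp] using this

/-- The graph `Gr(π) = {(π(ξ), ξ) : ξ ∈ V*}` of a map `π : V* → V`. -/
def gr (π : Module.Dual ℝ V →ₗ[ℝ] V) : Submodule ℝ (V × Module.Dual ℝ V) where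
  carrier := {a | π a.2 = a.1}
  add_mem' := by
    intro a b ha hb
    simp only [Set.mem_setOf_eq, Prod.fst_add, Prod.snd_add, map_add] at *
    rw [ha, hb]
  zero_mem' := by simp
  smul_mem' := by
    intro r a ha
    simp only [Set.mem_setOf_eq, Prod.smul_fst, Prod.smul_snd, map_smul] at *
    rw [ha]


lemma gpair_symm (a b : V × Module.Dual ℝ V) : gpair a b = gpair b a := by
  simp [gpair, LinearMap.mk₂_apply, add_comm]

lemma gpair_injective [FiniteDimensional ℝ V] :
    Function.Injective (gpair (V := V)) := by
  intro a b h
  have h' : ∀ c, gpair a c = gpair b c := fun c => by rw [h]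
  have h1 : a.2 = b.2 := by
    ext u
    have := h' (u, 0)
    simpa [gpair, LinearMap.mk₂_apply] using this
  have h2 : a.1 = b.1 := by
    have : ∀ η : Module.Dual ℝ V, η (a.1 - b.1) = 0 := by
      intro η
      have := h' (0, η)
      simp only [gpair, LinearMap.mk₂_apply, map_zero, zero_add] at this
      simp [map_sub, this]
    rw [← sub_eq_zero]
    exact (Module.forall_dual_apply_eq_zero_iff ℝ _).mp this
  exact Prod.ext h2 h1

lemma gperp_gperp [FiniteDimensional ℝ V] (S : Submodule ℝ (V × Module.Dual ℝ V)) :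
    gperp (gperp S) = S := by
  apply le_antisymm
  · intro a ha
    rw [← Subspace.forall_mem_dualAnnihilator_apply_eq_zero_iff S a]
    intro f hf
    obtain ⟨b, rfl⟩ := (LinearMap.injective_iff_surjective_of_finrank_eq_finrank
      (by rw [Subspace.dual_finrank_eq])).mp (gpair_injective (V := V)) f
    have hb : b ∈ gperp S := fun c hc => (Submodule.mem_dualAnnihilator _).mp hf c hc
    have := ha b hb
    rwa [gpair_symm] at this
  · intro a ha b hb
    rw [gpair_symm]
    exact hb a ha

theorem stmt0 [FiniteDimensional ℝ V]
    (L I : Submodule ℝ (V × Module.Dual ℝ V))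
    (hL : IsLagrangian L)
    (hI : ∀ a ∈ I, ∀ b ∈ I, gpair a b = 0) :
    IsLagrangian ((L ⊓ gperp I) ⊔ I) := by
  have hLiso : ∀ a ∈ L, ∀ b ∈ L, gpair a b = 0 := fun a ha b hb => by
    rw [← hL] at ha; exact ha b hb
  have hIsub : I ≤ gperp I := fun a ha b hb => hI a ha b hb
  have key : gperp (L ⊓ gperp I) = L ⊔ I := by
    have : L ⊓ gperp I = gperp (L ⊔ I) := by
      apply le_antisymm
      · rintro a ⟨haL, haI⟩ b hb
        obtain ⟨c, hc, d, hd, rfl⟩ := Submodule.mem_sup.mp hb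
        rw [map_add]
        rw [← hL] at haL
        rw [haL c hc, haI d hd, add_zero]
      · intro a ha
        refine ⟨?_, ?_⟩
        · rw [← hL]; exact fun b hb => ha b (Submodule.mem_sup_left hb)
        · exact fun b hb => ha b (Submodule.mem_sup_right hb)
    rw [this, gperp_gperp]
  unfold IsLagrangian
  apply le_antisymm
  · intro a ha
    have haI : a ∈ gperp I := fun b hb => ha b (Submodule.mem_sup_right hb)
    have haLI : a ∈ L ⊔ I := by
      rw [← key]
      exact fun b hb => ha b (Submodule.mem_sup_left hb)
    obtain ⟨l, hl, i, hi, rfl⟩ := Submodule.mem_sup.mp haLI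
    apply Submodule.add_mem _ _ (Submodule.mem_sup_right hi)
    apply Submodule.mem_sup_left
    refine ⟨hl, fun b hb => ?_⟩
    have h1 := haI b hb
    have h2 := hI i hi b hb
    rw [map_add, LinearMap.add_apply, h2, add_zero] at h1
    exact h1
  · intro a ha b hb
    obtain ⟨la, hla, ia, hia, rfl⟩ := Submodule.mem_sup.mp ha
    obtain ⟨lb, hlb, ib, hib, rfl⟩ := Submodule.mem_sup.mp hb
    have h1 : gpair la lb = 0 := hLiso la hla.1 lb hlb.1
    have h2 : gpair la ib = 0 := hla.2 ib hib
    have h3 : gpair ia lb = 0 := by rw [gpair_symm]; exact hlb.2 ia hia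
    have h4 : gpair ia ib = 0 := hI ia hia ib hib
    simp [map_add, LinearMap.add_apply, h1, h2, h3, h4]
end

section
/- (Magri's recipe reduces to Magri's original recipe in the Poisson case) Let V be a finite-dimensional real vector space and π_L, π_R : V* → V skew-symmetric linear maps. Then the kernel of the Lagrangian subspace 𝒩 := Gr(π_L) ⋆ (Gr(π_R) ⊛ Gr(−π_L)) equals π_L(ker π_R); that is, {u ∈ V : (u, 0) ∈ 𝒩} = {π_L(ξ) : ξ ∈ V*, π_R(ξ) = 0}. Here Gr(π) := {(π(ξ), ξ) : ξ ∈ V*}, ⋆ is the tangent product and ⊛ is the cotangent product. -/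
open Module

variable {V W : Type*} [AddCommGroup V] [Module ℝ V] [AddCommGroup W] [Module ℝ W]

theorem stmt14 [FiniteDimensional ℝ V]
    (πL πR : Module.Dual ℝ V →ₗ[ℝ] V)
    (hL : IsSkew πL) (hR : IsSkew πR) :
    (tanProd (gr πL) (cotProd (gr πR) (gr (-πL)))).comap
        (LinearMap.inl ℝ V (Module.Dual ℝ V))
      = (LinearMap.ker πR).map πL := by
  ext u
  constructor
  · rintro ⟨ξ, η, (h1 : πL ξ = _), ⟨a, b, (h2 : πR η = a), (h3 : (-πL) η = b), h4⟩, h5⟩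
    simp only [LinearMap.inl_apply] at h1 h4 h5 ⊢
    have hη : η = -ξ := eq_neg_of_add_eq_zero_right h5.symm
    subst hη
    refine ⟨ξ, ?_, h1⟩
    have : πR (-ξ) = a := h2
    simp only [map_neg, LinearMap.neg_apply, neg_neg] at this h3
    -- u = a + b, a = -πR ξ, b = πL ξ = u, so πR ξ = 0
    have hb : b = u := by rw [← h3, h1]
    have : u = -πR ξ + u := by rw [← this, hb] at h4; exact h4
    have h0 : -πR ξ = 0 := right_eq_add.mp this
    exact neg_eq_zero.mp h0
  · rintro ⟨ξ, hξ, hu⟩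
    refine ⟨ξ, -ξ, ?_, ⟨-πR ξ, πL ξ, ?_, ?_, ?_⟩, ?_⟩
    · exact hu
    · show πR (-ξ) = -πR ξ; simp
    · show (-πL) (-ξ) = πL ξ; simp
    · simp only [LinearMap.inl_apply, LinearMap.mem_ker.mp hξ, neg_zero, zero_add, hu]
    · simp
end

section
/- Let f, g : ℝ → ℝ be continuous functions such that for every rational number r, g(r) = q·f(r), where q is the denominator of r in lowest terms (cast to ℝ) and r is regarded as a real number via the canonical embedding. Then f(r) = 0 and g(r) = 0 for every rational number r. -/
open Filter Topology

lemma den_add_inv_prime (r : ℚ) {p : ℕ} (hp : p.Prime) (hgt : r.den < p) :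
    (r + 1/(p:ℚ)).den = r.den * p := by
  have hb0 : (0:ℤ) < (r.den : ℤ) * p := by
    have := r.pos; have := hp.pos; positivity
  have hpd : ¬ (p ∣ r.den) := fun hd => absurd (Nat.le_of_dvd r.pos hd) (not_le.mpr hgt)
  have hco : IsCoprime (r.num * p + r.den : ℤ) ((r.den : ℤ) * p) := by
    apply IsCoprime.mul_right
    · have h1 : IsCoprime (r.num : ℤ) (r.den : ℤ) := by
        rw [Int.isCoprime_iff_gcd_eq_one]; exact r.reduced
      have h2 : IsCoprime ((p:ℤ)) (r.den : ℤ) := by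
        rw [Int.isCoprime_iff_gcd_eq_one]
        simpa [Int.gcd] using (hp.coprime_iff_not_dvd.mpr hpd)
      have h3 : IsCoprime (r.num * p : ℤ) (r.den : ℤ) := h1.mul_left h2
      simpa using h3.add_mul_left_left 1
    · have h2 : IsCoprime ((r.den:ℤ)) ((p:ℤ)) := by
        rw [Int.isCoprime_iff_gcd_eq_one]
        simpa [Int.gcd, Nat.coprime_comm] using (hp.coprime_iff_not_dvd.mpr hpd).symm
      simpa [mul_comm] using h2.mul_add_left_left r.num
  have hd : (r.den : ℚ) ≠ 0 := Nat.cast_ne_zero.mpr r.den_nz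
  have hpq : ((p:ℚ)) ≠ 0 := Nat.cast_ne_zero.mpr hp.pos.ne'
  have key : r + 1/(p:ℚ) = ((r.num * p + r.den : ℤ) : ℚ) / (((r.den : ℤ) * p : ℤ) : ℚ) := by
    have hr : (r : ℚ) * r.den = r.num := Rat.mul_den_eq_num r
    rw [eq_div_iff (by push_cast; positivity)]
    push_cast
    field_simp
    linear_combination (p:ℚ) * hr
  have := Rat.den_div_eq_of_coprime hb0
    (by rwa [Int.isCoprime_iff_gcd_eq_one, Int.gcd] at hco)
  rw [key]
  exact_mod_cast this

theorem stmt19 (f g : ℝ → ℝ) (hf : Continuous f) (hg : Continuous g)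
    (h : ∀ r : ℚ, g (r : ℝ) = (r.den : ℝ) * f (r : ℝ)) :
    ∀ r : ℚ, f (r : ℝ) = 0 ∧ g (r : ℝ) = 0 := by
  intro r
  have hex : ∀ n : ℕ, ∃ q : ℕ, (max n (r.den + 1)) ≤ q ∧ q.Prime :=
    fun n => Nat.exists_infinite_primes _
  choose p hple hpp using hex
  set s : ℕ → ℚ := fun n => r + 1/(p n) with hs
  have hgt : ∀ n, r.den < p n :=
    fun n => lt_of_lt_of_le (Nat.lt_succ_self _) (le_trans (le_max_right _ _) (hple n))
  have hn : ∀ n, n ≤ p n := fun n => le_trans (le_max_left _ _) (hple n)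
  have hden : ∀ n, (s n).den = r.den * p n := fun n => den_add_inv_prime r (hpp n) (hgt n)
  have hpt : Tendsto (fun n => (p n : ℝ)) atTop atTop :=
    tendsto_natCast_atTop_atTop.comp (tendsto_atTop_mono hn tendsto_id)
  have hst : Tendsto (fun n => ((s n : ℚ) : ℝ)) atTop (nhds (r : ℝ)) := by
    have h1 : Tendsto (fun n => ((p n : ℝ))⁻¹) atTop (nhds 0) := tendsto_inv_atTop_zero.comp hpt
    have h2 := (tendsto_const_nhds (α := ℕ) (f := atTop) (x := ((r:ℚ):ℝ))).add h1
    rw [add_zero] at h2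
    refine h2.congr fun n => ?_
    simp [hs]
  have hfs : Tendsto (fun n => f (s n)) atTop (nhds (f r)) := (hf.continuousAt.tendsto).comp hst
  have hgs : Tendsto (fun n => g (s n)) atTop (nhds (g r)) := (hg.continuousAt.tendsto).comp hst
  have hdt : Tendsto (fun n => (((s n).den : ℝ))⁻¹) atTop (nhds 0) := by
    apply tendsto_inv_atTop_zero.comp
    apply tendsto_natCast_atTop_atTop.comp
    apply tendsto_atTop_mono (fun n => ?_) tendsto_id
    rw [hden n]
    calc n ≤ p n := hn n
      _ ≤ r.den * p n := Nat.le_mul_of_pos_left _ r.pos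
  have h0 : Tendsto (fun n => f (s n)) atTop (nhds 0) := by
    have hmul := hgs.mul hdt
    rw [mul_zero] at hmul
    refine hmul.congr fun n => ?_
    rw [h (s n)]
    have : (((s n).den : ℝ)) ≠ 0 := Nat.cast_ne_zero.mpr (s n).den_nz
    field_simp
  have hf0 : f r = 0 := tendsto_nhds_unique hfs h0
  exact ⟨hf0, by rw [h r, hf0, mul_zero]⟩
end
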